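/- Let ε > 0 and define, for sequences v^ℓ in a finite-dimensional inner product space given by the linearized fixed-point iteration of Algorithm 4.1 (v^ℓ solves the linear equation (v^ℓ − u^{prev})/Δt = (1/2)div⁺(∇⁺v^ℓ/√(ε + |∇⁺v^{ℓ−1}|²)) + (1/2)div⁻(∇⁻v^ℓ/√(ε + |∇⁻v^{ℓ−1}|²)) − (1/λ)(v^ℓ − f)). Then the discrete L² norms ‖v^ℓ‖ are bounded uniformly in ℓ: (1/Δt + 1/λ)‖v^ℓ‖ ≤ (1/Δt)‖u^{prev}‖ + (1/λ)‖f‖. -/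

import Mathlib

/-- Forward difference gradient, first component, reflecting boundary. -/
def gp1 (n : ℕ) (u : ℕ → ℕ → ℝ) (i j : ℕ) : ℝ := u (min (i + 1) (n - 1)) j - u i j

/-- Forward difference gradient, second component, reflecting boundary. -/
def gp2 (n : ℕ) (u : ℕ → ℕ → ℝ) (i j : ℕ) : ℝ := u i (min (j + 1) (n - 1)) - u i j

/-- Backward difference gradient, first component (truncated subtraction clamps at 0). -/
def gm1 (u : ℕ → ℕ → ℝ) (i j : ℕ) : ℝ := u i j - u (i - 1) j

/-- Backward difference gradient, second component. -/
def gm2 (u : ℕ → ℕ → ℝ) (i j : ℕ) : ℝ := u i j - u i (j - 1)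

/-- `div⁺`, the negative adjoint of `∇⁺`. -/
def dvp (n : ℕ) (p₁ p₂ : ℕ → ℕ → ℝ) (i j : ℕ) : ℝ :=
  (if i = 0 then p₁ 0 j else if i = n - 1 then -p₁ (n - 2) j else p₁ i j - p₁ (i - 1) j) +
  (if j = 0 then p₂ i 0 else if j = n - 1 then -p₂ i (n - 2) else p₂ i j - p₂ i (j - 1))

/-- `div⁻`, the negative adjoint of `∇⁻`. -/
def dvm (n : ℕ) (p₁ p₂ : ℕ → ℕ → ℝ) (i j : ℕ) : ℝ :=
  (if i = n - 1 then -p₁ (n - 1) j else if i = 0 then p₁ 1 j else p₁ (i + 1) j - p₁ i j) +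
  (if j = n - 1 then -p₂ i (n - 1) else if j = 0 then p₂ i 1 else p₂ i (j + 1) - p₂ i j)

/-- Discrete `L²` norm on the `n × n` grid (with grid size `h = 1`). -/
noncomputable def discNorm (n : ℕ) (u : ℕ → ℕ → ℝ) : ℝ :=
  Real.sqrt (∑ i ∈ Finset.range n, ∑ j ∈ Finset.range n, (u i j) ^ 2)

open Finset

/-- 1D summation by parts for the forward gradient / `div⁺` pair. -/
lemma sbp_p (n : ℕ) (hn : 2 ≤ n) (p v : ℕ → ℝ) :
    ∑ i ∈ range n, (if i = 0 then p 0 else if i = n - 1 then -p (n - 2) else p i - p (i - 1)) * v i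
      = -∑ i ∈ range n, p i * (v (min (i + 1) (n - 1)) - v i) := by
  obtain ⟨m, rfl⟩ : ∃ m, n = m + 2 := ⟨n - 2, by omega⟩
  simp only [show m + 2 - 1 = m + 1 from rfl, show m + 2 - 2 = m from rfl]
  rw [Finset.sum_range_succ, Finset.sum_range_succ', Finset.sum_range_succ, Finset.sum_range_succ']
  simp only [if_pos (rfl : (0:ℕ) = 0), if_neg (show ¬(m + 1 = 0) by omega),
    if_pos (rfl : m + 1 = m + 1), show min (0 + 1) (m + 1) = 1 by omega,
    show min (m + 1 + 1) (m + 1) = m + 1 by omega]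
  have e1 : ∀ x ∈ range m,
      (if x + 1 = 0 then p 0 else if x + 1 = m + 1 then -p m else p (x + 1) - p (x + 1 - 1)) * v (x + 1)
      = (p (x + 1) - p x) * v (x + 1) := by
    intro x hx; simp only [mem_range] at hx
    rw [if_neg (by omega), if_neg (by omega)]; simp
  have e2 : ∀ x ∈ range m,
      p (x + 1) * (v (min (x + 1 + 1) (m + 1)) - v (x + 1)) = p (x + 1) * (v (x + 2) - v (x + 1)) := by
    intro x hx; simp only [mem_range] at hx
    rw [show min (x + 1 + 1) (m + 1) = x + 2 by omega]
  rw [Finset.sum_congr rfl e1, Finset.sum_congr rfl e2]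
  have key : ∑ x ∈ range m, (p (x + 1) * v (x + 2) - p x * v (x + 1))
      = p m * v (m + 1) - p 0 * v 1 := by
    have := Finset.sum_range_sub (fun i => p i * v (i + 1)) m
    simpa using this
  have comb : ∑ x ∈ range m, (p (x + 1) - p x) * v (x + 1)
      + ∑ x ∈ range m, p (x + 1) * (v (x + 2) - v (x + 1))
      = p m * v (m + 1) - p 0 * v 1 := by
    rw [← Finset.sum_add_distrib, ← key]
    exact Finset.sum_congr rfl (fun x _ => by ring)
  simp only [if_true]
  linarith [comb]

/-- 1D summation by parts for the backward gradient / `div⁻` pair. -/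
lemma sbp_m (n : ℕ) (hn : 2 ≤ n) (p v : ℕ → ℝ) :
    ∑ i ∈ range n, (if i = n - 1 then -p (n - 1) else if i = 0 then p 1 else p (i + 1) - p i) * v i
      = -∑ i ∈ range n, p i * (v i - v (i - 1)) := by
  obtain ⟨m, rfl⟩ : ∃ m, n = m + 2 := ⟨n - 2, by omega⟩
  simp only [show m + 2 - 1 = m + 1 from rfl]
  rw [Finset.sum_range_succ, Finset.sum_range_succ', Finset.sum_range_succ, Finset.sum_range_succ']
  simp only [if_pos (rfl : m + 1 = m + 1), if_neg (show ¬((0:ℕ) = m + 1) by omega),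
    if_pos (rfl : (0:ℕ) = 0), show (0:ℕ) - 1 = 0 from rfl, show m + 1 - 1 = m from rfl,
    sub_self, mul_zero]
  have e1 : ∀ x ∈ range m,
      (if x + 1 = m + 1 then -p (m + 1) else if x + 1 = 0 then p 1 else p (x + 1 + 1) - p (x + 1)) * v (x + 1)
      = (p (x + 2) - p (x + 1)) * v (x + 1) := by
    intro x hx; simp only [mem_range] at hx
    rw [if_neg (by omega), if_neg (by omega)]
  have e2 : ∀ x ∈ range m,
      p (x + 1) * (v (x + 1) - v (x + 1 - 1)) = p (x + 1) * (v (x + 1) - v x) := by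
    intro x hx; norm_num
  rw [Finset.sum_congr rfl e1, Finset.sum_congr rfl e2]
  have key : ∑ x ∈ range m, (p (x + 2) * v (x + 1) - p (x + 1) * v x)
      = p (m + 1) * v m - p 1 * v 0 := by
    have := Finset.sum_range_sub (fun i => p (i + 1) * v i) m
    simpa using this
  have comb : ∑ x ∈ range m, (p (x + 2) - p (x + 1)) * v (x + 1)
      + ∑ x ∈ range m, p (x + 1) * (v (x + 1) - v x)
      = p (m + 1) * v m - p 1 * v 0 := by
    rw [← Finset.sum_add_distrib, ← key]
    exact Finset.sum_congr rfl (fun x _ => by ring)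
  simp only [if_true]
  linarith [comb]

lemma congr2 {n : ℕ} (a b : ℕ → ℕ → ℝ) (h : ∀ i j, a i j = b i j) :
    ∑ i ∈ range n, ∑ j ∈ range n, a i j = ∑ i ∈ range n, ∑ j ∈ range n, b i j :=
  Finset.sum_congr rfl fun i _ => Finset.sum_congr rfl fun j _ => h i j

/-- 2D duality for `div⁺`. -/
lemma dvp_dual (n : ℕ) (hn : 2 ≤ n) (p₁ p₂ v : ℕ → ℕ → ℝ) :
    ∑ i ∈ range n, ∑ j ∈ range n, dvp n p₁ p₂ i j * v i j
      = -∑ i ∈ range n, ∑ j ∈ range n,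
          (p₁ i j * gp1 n v i j + p₂ i j * gp2 n v i j) := by
  simp only [dvp, add_mul, Finset.sum_add_distrib, gp1, gp2]
  have h1 : ∑ i ∈ range n, ∑ j ∈ range n,
      (if i = 0 then p₁ 0 j else if i = n - 1 then -p₁ (n - 2) j else p₁ i j - p₁ (i - 1) j) * v i j
      = -∑ i ∈ range n, ∑ j ∈ range n, p₁ i j * (v (min (i + 1) (n - 1)) j - v i j) := by
    rw [Finset.sum_comm, Finset.sum_comm (f := fun i j => p₁ i j * (v (min (i + 1) (n - 1)) j - v i j))]
    rw [← Finset.sum_neg_distrib]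
    exact Finset.sum_congr rfl fun j _ => sbp_p n hn (fun i => p₁ i j) (fun i => v i j)
  have h2 : ∑ i ∈ range n, ∑ j ∈ range n,
      (if j = 0 then p₂ i 0 else if j = n - 1 then -p₂ i (n - 2) else p₂ i j - p₂ i (j - 1)) * v i j
      = -∑ i ∈ range n, ∑ j ∈ range n, p₂ i j * (v i (min (j + 1) (n - 1)) - v i j) := by
    rw [← Finset.sum_neg_distrib]
    exact Finset.sum_congr rfl fun i _ => sbp_p n hn (fun j => p₂ i j) (fun j => v i j)
  rw [h1, h2]
  rw [show ∀ A B : ℝ, -A + -B = -(A + B) from fun A B => by ring]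

/-- 2D duality for `div⁻`. -/
lemma dvm_dual (n : ℕ) (hn : 2 ≤ n) (p₁ p₂ v : ℕ → ℕ → ℝ) :
    ∑ i ∈ range n, ∑ j ∈ range n, dvm n p₁ p₂ i j * v i j
      = -∑ i ∈ range n, ∑ j ∈ range n,
          (p₁ i j * gm1 v i j + p₂ i j * gm2 v i j) := by
  simp only [dvm, add_mul, Finset.sum_add_distrib, gm1, gm2]
  have h1 : ∑ i ∈ range n, ∑ j ∈ range n,
      (if i = n - 1 then -p₁ (n - 1) j else if i = 0 then p₁ 1 j else p₁ (i + 1) j - p₁ i j) * v i j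
      = -∑ i ∈ range n, ∑ j ∈ range n, p₁ i j * (v i j - v (i - 1) j) := by
    rw [Finset.sum_comm, Finset.sum_comm (f := fun i j => p₁ i j * (v i j - v (i - 1) j))]
    rw [← Finset.sum_neg_distrib]
    exact Finset.sum_congr rfl fun j _ => sbp_m n hn (fun i => p₁ i j) (fun i => v i j)
  have h2 : ∑ i ∈ range n, ∑ j ∈ range n,
      (if j = n - 1 then -p₂ i (n - 1) else if j = 0 then p₂ i 1 else p₂ i (j + 1) - p₂ i j) * v i j
      = -∑ i ∈ range n, ∑ j ∈ range n, p₂ i j * (v i j - v i (j - 1)) := by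
    rw [← Finset.sum_neg_distrib]
    exact Finset.sum_congr rfl fun i _ => sbp_m n hn (fun j => p₂ i j) (fun j => v i j)
  rw [h1, h2]
  rw [show ∀ A B : ℝ, -A + -B = -(A + B) from fun A B => by ring]

/-- Cauchy–Schwarz with square roots over a finset. -/
lemma cs_sqrt {ι : Type*} (s : Finset ι) (f g : ι → ℝ) :
    ∑ i ∈ s, f i * g i ≤ Real.sqrt (∑ i ∈ s, f i ^ 2) * Real.sqrt (∑ i ∈ s, g i ^ 2) := by
  calc ∑ i ∈ s, f i * g i ≤ |∑ i ∈ s, f i * g i| := le_abs_self _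
    _ = Real.sqrt ((∑ i ∈ s, f i * g i) ^ 2) := (Real.sqrt_sq_eq_abs _).symm
    _ ≤ Real.sqrt ((∑ i ∈ s, f i ^ 2) * ∑ i ∈ s, g i ^ 2) :=
        Real.sqrt_le_sqrt (Finset.sum_mul_sq_le_sq_mul_sq s f g)
    _ = _ := Real.sqrt_mul (Finset.sum_nonneg fun i _ => sq_nonneg _) _

/-- Cauchy–Schwarz for the discrete grid norm. -/
lemma cs2 (n : ℕ) (u v : ℕ → ℕ → ℝ) :
    ∑ i ∈ range n, ∑ j ∈ range n, u i j * v i j ≤ discNorm n u * discNorm n v := by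
  have h := cs_sqrt (range n ×ˢ range n) (fun p => u p.1 p.2) (fun p => v p.1 p.2)
  simpa [Finset.sum_product, discNorm] using h

/-- Lemma 4.2: uniform `L²` bound for the linearized fixed point iteration. -/
theorem stmt_18 (n : ℕ) (hn : 2 ≤ n) (ε lam Δt : ℝ) (hε : 0 < ε) (hlam : 0 < lam)
    (hΔt : 0 < Δt) (f uprev w v : ℕ → ℕ → ℝ)
    (heq : ∀ i ∈ Finset.range n, ∀ j ∈ Finset.range n,
      (v i j - uprev i j) / Δt =
        (1 / 2) * dvp n
            (fun i j => gp1 n v i j / Real.sqrt (ε + ((gp1 n w i j) ^ 2 + (gp2 n w i j) ^ 2)))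
            (fun i j => gp2 n v i j / Real.sqrt (ε + ((gp1 n w i j) ^ 2 + (gp2 n w i j) ^ 2)))
            i j +
        (1 / 2) * dvm n
            (fun i j => gm1 v i j / Real.sqrt (ε + ((gm1 w i j) ^ 2 + (gm2 w i j) ^ 2)))
            (fun i j => gm2 v i j / Real.sqrt (ε + ((gm1 w i j) ^ 2 + (gm2 w i j) ^ 2)))
            i j -
        (1 / lam) * (v i j - f i j)) :
    (1 / Δt + 1 / lam) * discNorm n v ≤ (1 / Δt) * discNorm n uprev + (1 / lam) * discNorm n f := by
  set P₁ : ℕ → ℕ → ℝ :=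
    fun i j => gp1 n v i j / Real.sqrt (ε + ((gp1 n w i j) ^ 2 + (gp2 n w i j) ^ 2)) with hP₁
  set P₂ : ℕ → ℕ → ℝ :=
    fun i j => gp2 n v i j / Real.sqrt (ε + ((gp1 n w i j) ^ 2 + (gp2 n w i j) ^ 2)) with hP₂
  set M₁ : ℕ → ℕ → ℝ :=
    fun i j => gm1 v i j / Real.sqrt (ε + ((gm1 w i j) ^ 2 + (gm2 w i j) ^ 2)) with hM₁
  set M₂ : ℕ → ℕ → ℝ :=
    fun i j => gm2 v i j / Real.sqrt (ε + ((gm1 w i j) ^ 2 + (gm2 w i j) ^ 2)) with hM₂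
  set Sv := ∑ i ∈ range n, ∑ j ∈ range n, v i j ^ 2 with hSvdef
  set Iu := ∑ i ∈ range n, ∑ j ∈ range n, uprev i j * v i j with hIudef
  set If := ∑ i ∈ range n, ∑ j ∈ range n, f i j * v i j with hIfdef
  set Dp := ∑ i ∈ range n, ∑ j ∈ range n, dvp n P₁ P₂ i j * v i j with hDpdef
  set Dm := ∑ i ∈ range n, ∑ j ∈ range n, dvm n M₁ M₂ i j * v i j with hDmdef
  -- multiply the equation by v and sum over the grid
  have h0 : ∑ i ∈ range n, ∑ j ∈ range n, ((v i j - uprev i j) / Δt * v i j)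
      = ∑ i ∈ range n, ∑ j ∈ range n,
          (((1 / 2) * dvp n P₁ P₂ i j + (1 / 2) * dvm n M₁ M₂ i j
            - (1 / lam) * (v i j - f i j)) * v i j) :=
    Finset.sum_congr rfl fun i hi => Finset.sum_congr rfl fun j hj => by
      rw [heq i hi j hj]
  have hL : ∑ i ∈ range n, ∑ j ∈ range n, ((v i j - uprev i j) / Δt * v i j)
      = (1 / Δt) * Sv - (1 / Δt) * Iu := by
    rw [congr2 _ _ (fun i j => by ring :
      ∀ i j, (v i j - uprev i j) / Δt * v i j
        = (1 / Δt) * v i j ^ 2 - (1 / Δt) * (uprev i j * v i j))]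
    simp only [Finset.sum_sub_distrib, ← Finset.mul_sum]
    rfl
  have hR : ∑ i ∈ range n, ∑ j ∈ range n,
      (((1 / 2) * dvp n P₁ P₂ i j + (1 / 2) * dvm n M₁ M₂ i j
        - (1 / lam) * (v i j - f i j)) * v i j)
      = (1 / 2) * Dp + (1 / 2) * Dm - ((1 / lam) * Sv - (1 / lam) * If) := by
    rw [congr2 _ _ (fun i j => by ring :
      ∀ i j, ((1 / 2) * dvp n P₁ P₂ i j + (1 / 2) * dvm n M₁ M₂ i j
          - (1 / lam) * (v i j - f i j)) * v i j
        = (1 / 2) * (dvp n P₁ P₂ i j * v i j) + (1 / 2) * (dvm n M₁ M₂ i j * v i j)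
          - ((1 / lam) * v i j ^ 2 - (1 / lam) * (f i j * v i j)))]
    simp only [Finset.sum_sub_distrib, Finset.sum_add_distrib, ← Finset.mul_sum]
    rfl
  have hDp : Dp ≤ 0 := by
    rw [hDpdef, dvp_dual n hn P₁ P₂ v, neg_nonpos]
    refine Finset.sum_nonneg fun i _ => Finset.sum_nonneg fun j _ => ?_
    have e : P₁ i j * gp1 n v i j + P₂ i j * gp2 n v i j
        = (gp1 n v i j ^ 2 + gp2 n v i j ^ 2)
            / Real.sqrt (ε + ((gp1 n w i j) ^ 2 + (gp2 n w i j) ^ 2)) := by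
      rw [hP₁, hP₂]; ring
    rw [e]
    positivity
  have hDm : Dm ≤ 0 := by
    rw [hDmdef, dvm_dual n hn M₁ M₂ v, neg_nonpos]
    refine Finset.sum_nonneg fun i _ => Finset.sum_nonneg fun j _ => ?_
    have e : M₁ i j * gm1 v i j + M₂ i j * gm2 v i j
        = (gm1 v i j ^ 2 + gm2 v i j ^ 2)
            / Real.sqrt (ε + ((gm1 w i j) ^ 2 + (gm2 w i j) ^ 2)) := by
      rw [hM₁, hM₂]; ring
    rw [e]
    positivity
  have hmain : (1 / Δt) * Sv - (1 / Δt) * Iu + ((1 / lam) * Sv - (1 / lam) * If) ≤ 0 := by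
    rw [hL] at h0; rw [hR] at h0; linarith
  -- Cauchy–Schwarz
  have hIu : Iu ≤ discNorm n uprev * discNorm n v := cs2 n uprev v
  have hIf : If ≤ discNorm n f * discNorm n v := cs2 n f v
  have hNv : 0 ≤ discNorm n v := Real.sqrt_nonneg _
  have hNu : 0 ≤ discNorm n uprev := Real.sqrt_nonneg _
  have hNf : 0 ≤ discNorm n f := Real.sqrt_nonneg _
  have hSv : discNorm n v ^ 2 = Sv :=
    Real.sq_sqrt (Finset.sum_nonneg fun i _ => Finset.sum_nonneg fun j _ => sq_nonneg _)
  rcases eq_or_lt_of_le hNv with h | h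
  · rw [← h, mul_zero]
    positivity
  · have hΔt' : 0 < 1 / Δt := by positivity
    have hlam' : 0 < 1 / lam := by positivity
    have key : (1 / Δt + 1 / lam) * discNorm n v * discNorm n v
        ≤ ((1 / Δt) * discNorm n uprev + (1 / lam) * discNorm n f) * discNorm n v := by
      have : (1 / Δt + 1 / lam) * (discNorm n v * discNorm n v) ≤ (1 / Δt) * Iu + (1 / lam) * If := by
        have : discNorm n v * discNorm n v = Sv := by rw [← hSv]; ring
        rw [this]; linarith
      nlinarith [mul_le_mul_of_nonneg_left hIu (le_of_lt hΔt'),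
        mul_le_mul_of_nonneg_left hIf (le_of_lt hlam')]
    exact le_of_mul_le_mul_right key h
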